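/- Let Φ be a complex-linear endomorphism of the space of n×n complex matrices of Kraus form Φ(ρ) = Σ_{m ∈ A} M_m ρ M_m† for a finite family (M_m) of n×n complex matrices. If there exists an invertible complex-linear map 𝒰 on n×n complex matrices with 𝒰 ∘ Φ ∘ 𝒰⁻¹ = −Φ, then Tr(M_m) = 0 for every m ∈ A. -/

import Mathlib

open Matrix

lemma stdBasis_repr_aux (n : ℕ) (x : Matrix (Fin n) (Fin n) ℂ) (p : Fin n × Fin n) :
    (Matrix.stdBasis ℂ (Fin n) (Fin n)).repr x p = x p.1 p.2 := by
  set b := Matrix.stdBasis ℂ (Fin n) (Fin n)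
  have hx : x = ∑ q : Fin n × Fin n, x q.1 q.2 • b q := by
    rw [Fintype.sum_prod_type]
    conv_lhs => rw [matrix_eq_sum_single x]
    refine Finset.sum_congr rfl fun i _ => Finset.sum_congr rfl fun j _ => ?_
    rw [Matrix.stdBasis_eq_single, Matrix.smul_single, smul_eq_mul, mul_one]
  conv_lhs => rw [hx]
  rw [b.repr_sum_self]

lemma sandwich_apply (n : ℕ) (A B : Matrix (Fin n) (Fin n) ℂ) (i j : Fin n) :
    (A * Matrix.single i j (1 : ℂ) * B) i j = A i i * B j j := by
  rw [Matrix.mul_apply]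
  rw [Finset.sum_eq_single j]
  · simp
  · intro c _ hc
    simp [hc]
  · simp

lemma trace_T_eq (n k : ℕ) (M : Fin k → Matrix (Fin n) (Fin n) ℂ)
    (T : Matrix (Fin n) (Fin n) ℂ →ₗ[ℂ] Matrix (Fin n) (Fin n) ℂ)
    (hT : ∀ ρ, T ρ = ∑ m, M m * ρ * (M m)ᴴ) :
    LinearMap.trace ℂ _ T = ∑ m, (M m).trace * starRingEnd ℂ ((M m).trace) := by
  set b := Matrix.stdBasis ℂ (Fin n) (Fin n)
  rw [LinearMap.trace_eq_matrix_trace ℂ b T, Matrix.trace]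
  have : ∀ p : Fin n × Fin n,
      (LinearMap.toMatrix b b T).diag p = ∑ m, (M m) p.1 p.1 * (M m)ᴴ p.2 p.2 := by
    intro p
    rw [Matrix.diag, LinearMap.toMatrix_apply, stdBasis_repr_aux, hT]
    rw [Matrix.sum_apply]
    refine Finset.sum_congr rfl fun m _ => ?_
    rw [show b p = Matrix.single p.1 p.2 (1 : ℂ) from Matrix.stdBasis_eq_single ℂ p.1 p.2]
    exact sandwich_apply n (M m) (M m)ᴴ p.1 p.2
  rw [Finset.sum_congr rfl fun p _ => this p, Finset.sum_comm]
  refine Finset.sum_congr rfl fun m _ => ?_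
  calc ∑ x : Fin n × Fin n, M m x.1 x.1 * (M m)ᴴ x.2 x.2
      = (M m).trace * (M m)ᴴ.trace := by
        simp [Matrix.trace, Matrix.diag, Finset.sum_mul_sum, Fintype.sum_prod_type]
    _ = (M m).trace * starRingEnd ℂ ((M m).trace) := by
        rw [Matrix.trace_conjTranspose]; rfl

theorem stmt_14 (n k : ℕ) (M : Fin k → Matrix (Fin n) (Fin n) ℂ)
    (T : Matrix (Fin n) (Fin n) ℂ →ₗ[ℂ] Matrix (Fin n) (Fin n) ℂ)
    (hT : ∀ ρ, T ρ = ∑ m, M m * ρ * (M m)ᴴ)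
    (hsym : ∃ U : Matrix (Fin n) (Fin n) ℂ ≃ₗ[ℂ] Matrix (Fin n) (Fin n) ℂ,
      ∀ ρ, U (T (U.symm ρ)) = -(T ρ)) :
    ∀ m, (M m).trace = 0 := by
  obtain ⟨U, hU⟩ := hsym
  -- trace T = trace (-T)
  have hconj : U.conj T = -T := by
    ext ρ
    simp [LinearEquiv.conj_apply, hU ρ]
  have htr0 : LinearMap.trace ℂ _ T = 0 := by
    have h1 : LinearMap.trace ℂ _ (U.conj T) = LinearMap.trace ℂ _ T :=
      LinearMap.trace_conj' T U
    rw [hconj, map_neg] at h1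
    linear_combination -h1 / 2
  have hsum := trace_T_eq n k M T hT
  rw [htr0] at hsum
  -- deduce each term is zero
  have hreal : ∑ m, Complex.normSq ((M m).trace) = 0 := by
    have := congrArg Complex.re hsum.symm
    simpa [Complex.mul_conj] using this
  intro m
  have hm : Complex.normSq ((M m).trace) = 0 := by
    have := (Finset.sum_eq_zero_iff_of_nonneg
      (fun i _ => Complex.normSq_nonneg ((M i).trace))).1 hreal m (Finset.mem_univ m)
    exact this
  exact Complex.normSq_eq_zero.mp hm
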